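/- The polynomial p(a) = 729*a^20 - 2214*a^18 - 315*a^16 - 2568*a^14 - 2206*a^12 - 1188*a^10 - 2206*a^8 - 2568*a^6 - 315*a^4 - 2214*a^2 + 729 has exactly one real root in the interval (1, infinity), and this root lies in the interval (1.87, 1.88). -/

import Mathlib

private lemma q_neg (x : ℝ) (h1 : 1 < x) (h2 : x ≤ 3.4969) :
    729*x^10 - 2214*x^9 - 315*x^8 - 2568*x^7 - 2206*x^6 - 1188*x^5 - 2206*x^4
      - 2568*x^3 - 315*x^2 - 2214*x + 729 < 0 := by
  have hx0 : (0:ℝ) ≤ x := by linarith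
  have hc : (0:ℝ) ≤ 3.4969 - x := by linarith
  have hm : (0:ℝ) ≤ x - 1 := by linarith
  nlinarith [mul_nonneg hc (pow_nonneg hx0 9), mul_nonneg hc (pow_nonneg hx0 8),
    mul_nonneg hc (pow_nonneg hx0 7), mul_nonneg hc (pow_nonneg hx0 6),
    mul_nonneg hm (pow_nonneg hx0 5), mul_nonneg hm (pow_nonneg hx0 4),
    mul_nonneg hm (pow_nonneg hx0 3), mul_nonneg hm (pow_nonneg hx0 2),
    mul_nonneg hm hx0, hm, pow_nonneg hx0 5, pow_nonneg hx0 4, pow_nonneg hx0 3,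
    pow_nonneg hx0 2]

private lemma phi_pos (x : ℝ) (h : 3.4969 ≤ x) :
    0 < 7290*x^9 - 19926*x^8 - 2520*x^7 - 17976*x^6 - 13236*x^5 - 5940*x^4
      - 8824*x^3 - 7704*x^2 - 630*x - 2214 := by
  have hx0 : (0:ℝ) ≤ x := by linarith
  have hc : (0:ℝ) ≤ x - 3.4969 := by linarith
  nlinarith [mul_nonneg hc (pow_nonneg hx0 8), mul_nonneg hc (pow_nonneg hx0 7),
    mul_nonneg hc (pow_nonneg hx0 6), mul_nonneg hc (pow_nonneg hx0 5),
    mul_nonneg hc (pow_nonneg hx0 4), mul_nonneg hc (pow_nonneg hx0 3),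
    mul_nonneg hc (pow_nonneg hx0 2), mul_nonneg hc hx0, hc]

private lemma f_hasDeriv (x : ℝ) :
    HasDerivAt (fun a : ℝ => 729 * a ^ 20 - 2214 * a ^ 18 - 315 * a ^ 16 - 2568 * a ^ 14
        - 2206 * a ^ 12 - 1188 * a ^ 10 - 2206 * a ^ 8 - 2568 * a ^ 6 - 315 * a ^ 4
        - 2214 * a ^ 2 + 729)
      (2 * x * (7290*(x^2)^9 - 19926*(x^2)^8 - 2520*(x^2)^7 - 17976*(x^2)^6 - 13236*(x^2)^5
        - 5940*(x^2)^4 - 8824*(x^2)^3 - 7704*(x^2)^2 - 630*(x^2) - 2214)) x := by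
  have h := (((((((((((hasDerivAt_pow 20 x).const_mul (729:ℝ)).sub
    ((hasDerivAt_pow 18 x).const_mul 2214)).sub
    ((hasDerivAt_pow 16 x).const_mul 315)).sub
    ((hasDerivAt_pow 14 x).const_mul 2568)).sub
    ((hasDerivAt_pow 12 x).const_mul 2206)).sub
    ((hasDerivAt_pow 10 x).const_mul 1188)).sub
    ((hasDerivAt_pow 8 x).const_mul 2206)).sub
    ((hasDerivAt_pow 6 x).const_mul 2568)).sub
    ((hasDerivAt_pow 4 x).const_mul 315)).sub
    ((hasDerivAt_pow 2 x).const_mul 2214)).add_const (729:ℝ)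
  refine h.congr_deriv ?_
  norm_num
  ring

/-- the polynomial `p(a)` arising from the second twist coefficient of the
shifted ellipse-hyperbola lens billiard has exactly one real root in `(1, ∞)`, and this
root lies in `(1.87, 1.88)`. -/
theorem tau2_polynomial_unique_root (p : ℝ → ℝ)
    (hp : ∀ a : ℝ, p a =
      729 * a ^ 20 - 2214 * a ^ 18 - 315 * a ^ 16 - 2568 * a ^ 14 - 2206 * a ^ 12
        - 1188 * a ^ 10 - 2206 * a ^ 8 - 2568 * a ^ 6 - 315 * a ^ 4 - 2214 * a ^ 2
        + 729) :
    (∃! a : ℝ, 1 < a ∧ p a = 0) ∧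
    (∀ a : ℝ, 1 < a → p a = 0 → 1.87 < a ∧ a < 1.88) := by
  have hpf : p = fun a : ℝ => 729 * a ^ 20 - 2214 * a ^ 18 - 315 * a ^ 16 - 2568 * a ^ 14
      - 2206 * a ^ 12 - 1188 * a ^ 10 - 2206 * a ^ 8 - 2568 * a ^ 6 - 315 * a ^ 4
      - 2214 * a ^ 2 + 729 := funext hp
  -- p(a) < 0 for 1 < a ≤ 1.87
  have hneg : ∀ a : ℝ, 1 < a → a ≤ 1.87 → p a < 0 := by
    intro a ha hb
    have h1 : (1:ℝ) < a ^ 2 := by nlinarith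
    have h2 : a ^ 2 ≤ 3.4969 := by nlinarith
    have h := q_neg (a ^ 2) h1 h2
    have hpa : p a = 729*(a^2)^10 - 2214*(a^2)^9 - 315*(a^2)^8 - 2568*(a^2)^7
        - 2206*(a^2)^6 - 1188*(a^2)^5 - 2206*(a^2)^4 - 2568*(a^2)^3 - 315*(a^2)^2
        - 2214*(a^2) + 729 := by rw [hp a]; ring
    linarith [hpa ▸ h]
  -- p is strictly monotone on [1.87, ∞)
  have hmono : StrictMonoOn p (Set.Ici (1.87 : ℝ)) := by
    rw [hpf]
    apply strictMonoOn_of_deriv_pos (convex_Ici _)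
    · exact fun x _ => (f_hasDeriv x).continuousAt.continuousWithinAt
    · intro x hx
      rw [interior_Ici] at hx
      rw [(f_hasDeriv x).deriv]
      have hx0 : (0:ℝ) < x := lt_trans (by norm_num) hx
      have hx2 : (3.4969 : ℝ) ≤ x ^ 2 := by nlinarith [Set.mem_Ioi.mp hx]
      exact mul_pos (by linarith) (phi_pos (x ^ 2) hx2)
  have h187 : p 1.87 < 0 := hneg 1.87 (by norm_num) le_rfl
  have h188 : (0:ℝ) < p 1.88 := by rw [hp]; norm_num
  -- p(a) > 0 for a ≥ 1.88
  have hpos : ∀ a : ℝ, 1.88 ≤ a → 0 < p a := by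
    intro a ha
    rcases eq_or_lt_of_le ha with h | h
    · rwa [← h]
    · exact lt_trans h188 (hmono (by norm_num) (le_of_lt (lt_of_le_of_lt (by norm_num) h)) h)
  -- any root with 1 < a lies in (1.87, 1.88)
  have hloc : ∀ a : ℝ, 1 < a → p a = 0 → 1.87 < a ∧ a < 1.88 := by
    intro a ha h0
    constructor
    · by_contra h
      exact absurd h0 (ne_of_lt (hneg a ha (not_lt.mp h)))
    · by_contra h
      exact absurd h0 (ne_of_gt (hpos a (not_lt.mp h)))
  refine ⟨?_, hloc⟩
  -- existence via IVT
  have hcont : ContinuousOn p (Set.Icc (1.87:ℝ) 1.88) := by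
    rw [hpf]
    exact fun x _ => (f_hasDeriv x).continuousAt.continuousWithinAt
  have hivt := intermediate_value_Ioo (by norm_num : (1.87:ℝ) ≤ 1.88) hcont
  have h0mem : (0:ℝ) ∈ Set.Ioo (p 1.87) (p 1.88) := ⟨h187, h188⟩
  obtain ⟨c, hc, hc0⟩ := hivt h0mem
  refine ⟨c, ⟨lt_trans (by norm_num) hc.1, hc0⟩, ?_⟩
  intro b ⟨hb1, hb0⟩
  obtain ⟨hbl, hbr⟩ := hloc b hb1 hb0
  exact hmono.injOn (Set.mem_Ici.mpr (le_of_lt hbl)) (Set.mem_Ici.mpr (le_of_lt hc.1))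
    (by rw [hb0, hc0])
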